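/- Let λ ∈ (0,1], A ∈ (0,1], and let (a_n), (b_n) be sequences of positive reals with b_n ≥ A^{2ⁿ} for all n, a₀ ≥ b₀, a₁ ≥ b₁, and a_n ≥ λⁿ · (min(a_{n−1}, b_{n−1}))² for all n ≥ 1. Then a_n ≥ λ^{2^{n+1}} · A^{2ⁿ} for all n ≥ 1; in particular min(a_n, b_n) ≥ (λ² A)^{2ⁿ}. -/

import Mathlib

/-- Final iteration argument of Section 4: if `b_n ≥ A^{2ⁿ}`, `a₀ ≥ b₀`,
`a₁ ≥ b₁` and `a_n ≥ λⁿ (min(a_{n−1}, b_{n−1}))²`, then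
`a_n ≥ λ^{2^{n+1}} A^{2ⁿ}` for `n ≥ 1`, and `min(a_n, b_n) ≥ (λ²A)^{2ⁿ}`. -/
theorem stmt9 (lam A : ℝ) (hlam0 : 0 < lam) (hlam1 : lam ≤ 1)
    (hA0 : 0 < A) (hA1 : A ≤ 1)
    (a b : ℕ → ℝ) (ha : ∀ n, 0 < a n) (hb : ∀ n, 0 < b n)
    (hbA : ∀ n, A^(2^n) ≤ b n)
    (h0 : b 0 ≤ a 0) (h1 : b 1 ≤ a 1)
    (hrec : ∀ n, 1 ≤ n → lam^n * (min (a (n-1)) (b (n-1)))^2 ≤ a n) :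
    ∀ n, 1 ≤ n → lam^(2^(n+1)) * A^(2^n) ≤ a n ∧
      (lam^2 * A)^(2^n) ≤ min (a n) (b n) := by
  have hle : ∀ n : ℕ, n + 2 ≤ 2^(n+1) := by
    intro n
    have := Nat.lt_two_pow_self (n := n+1)
    omega
  -- key invariant
  have key : ∀ n, 1 ≤ n → lam^(2^(n+1) - (n+2)) * A^(2^n) ≤ min (a n) (b n) := by
    intro n hn
    induction n with
    | zero => omega
    | succ m ih =>
      rcases Nat.eq_or_lt_of_le hn with h | h
      · -- m = 0, base case n = 1
        have hm : m = 0 := by omega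
        subst hm
        norm_num
        constructor
        · calc lam * A^2 ≤ 1 * A^2 := by nlinarith [sq_nonneg A]
            _ = A^2 := by ring
            _ ≤ b 1 := by have := hbA 1; norm_num at this; exact this
            _ ≤ a 1 := h1
        · calc lam * A^2 ≤ 1 * A^2 := by nlinarith [sq_nonneg A]
            _ = A^2 := by ring
            _ ≤ b 1 := by have := hbA 1; norm_num at this; exact this
      · have hm1 : 1 ≤ m := by omega
        have ih := ih hm1
        have hmin : 0 < min (a m) (b m) := lt_min (ha m) (hb m)
        have hrecm := hrec (m+1) (by omega)
        simp only [Nat.add_sub_cancel] at hrecm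
        have hsq : (lam^(2^(m+1) - (m+2)) * A^(2^m))^2 ≤ (min (a m) (b m))^2 := by
          apply sq_le_sq' _ ih
          nlinarith [pow_pos hlam0 (2^(m+1) - (m+2)), pow_pos hA0 (2^m)]
        have hstep : lam^(m+1) * (lam^(2^(m+1) - (m+2)) * A^(2^m))^2 ≤ a (m+1) := by
          calc lam^(m+1) * (lam^(2^(m+1) - (m+2)) * A^(2^m))^2
              ≤ lam^(m+1) * (min (a m) (b m))^2 := by
                apply mul_le_mul_of_nonneg_left hsq (le_of_lt (pow_pos hlam0 _))
            _ ≤ a (m+1) := hrecm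
        have hexp : lam^(m+1) * (lam^(2^(m+1) - (m+2)) * A^(2^m))^2
            = lam^(2^(m+2) - (m+3)) * A^(2^(m+1)) := by
          rw [mul_pow, ← pow_mul, ← pow_mul, ← mul_assoc, ← pow_add]
          congr 1
          congr 1
          have := hle m
          have h2 : 2^(m+2) = 2 * 2^(m+1) := by ring
          omega
        rw [hexp] at hstep
        have hb' : lam^(2^(m+2) - (m+3)) * A^(2^(m+1)) ≤ b (m+1) := by
          calc lam^(2^(m+2) - (m+3)) * A^(2^(m+1))
              ≤ 1 * A^(2^(m+1)) := by
                apply mul_le_mul_of_nonneg_right (pow_le_one₀ hlam0.le hlam1)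
                  (le_of_lt (pow_pos hA0 _))
            _ = A^(2^(m+1)) := one_mul _
            _ ≤ b (m+1) := hbA (m+1)
        exact le_min hstep hb'
  intro n hn
  have hk := key n hn
  have hbound : lam^(2^(n+1)) * A^(2^n) ≤ lam^(2^(n+1) - (n+2)) * A^(2^n) := by
    apply mul_le_mul_of_nonneg_right _ (le_of_lt (pow_pos hA0 _))
    exact pow_le_pow_of_le_one hlam0.le hlam1 (Nat.sub_le _ _)
  constructor
  · exact le_trans hbound (le_trans hk (min_le_left _ _))
  · have heq : (lam^2 * A)^(2^n) = lam^(2^(n+1)) * A^(2^n) := by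
      rw [mul_pow, ← pow_mul]
      congr 2
      rw [pow_succ]
      ring
    rw [heq]
    exact le_trans hbound hk
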